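/- Let n ≥ 2. For every word u over the alphabet {T_1,…,T_{n−1}} and every i ∈ {1,…,n}, the word ∂_i(u) over {T_1,…,T_{n−2}} evaluates in S_{n−1} to the deleted permutation ∂_i(ū) of the evaluation ū ∈ S_n of u; equivalently, for all k ∈ {1,…,n−1}, the image of k under the evaluation of ∂_i(u) equals ((k^i)·ū)_{i·ū}, where j·σ denotes the image of j under σ. -/

import Mathlib

/-- Insertion map `k ↦ k^i` : equals `k` if `k < i`, and `k + 1` if `k ≥ i`. -/
def ins (i k : ℕ) : ℕ := if k < i then k else k + 1

/-- Deletion map `k ↦ k_i` (intended for `k ≠ i`) : equals `k` if `k < i`,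
and `k - 1` if `k > i`. -/
def del (i k : ℕ) : ℕ := if k < i then k else k - 1

/-- Evaluation of a word over the alphabet `{T_1, …}` (a letter `j` stands
for the adjacent transposition `τ_j = (j, j+1)`), acting on the right: the
first letter of the word acts first, so `k · (T_j :: w) = (k · T_j) · w`. -/
def wordEval : List ℕ → Equiv.Perm ℕ
  | [] => 1
  | j :: w => wordEval w * Equiv.swap j (j + 1)

/-- Word-level deletion `∂_i` : `∂_i(ε) = ε`; `∂_i(T_j · w) = ∂_{τ_j(i)}(w)`
if `i ∈ {j, j+1}`; and `∂_i(T_j · w) = T_{j_i} · ∂_i(w)` otherwise (in that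
case `τ_j(i) = i`). -/
def wdel : ℕ → List ℕ → List ℕ
  | _, [] => []
  | i, j :: w =>
      if i = j ∨ i = j + 1 then wdel (Equiv.swap j (j + 1) i) w
      else del i j :: wdel i w

lemma key1 (j i k : ℕ) (h : i = j ∨ i = j + 1) :
    Equiv.swap j (j + 1) (ins i k) = ins (Equiv.swap j (j + 1) i) k := by
  simp only [ins, Equiv.swap_apply_def]
  split_ifs <;> omega

lemma key2 (j i k : ℕ) (hj : 1 ≤ j) (hij : ¬(i = j ∨ i = j + 1)) :
    ins i (Equiv.swap (del i j) (del i j + 1) k) = Equiv.swap j (j + 1) (ins i k) := by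
  simp only [ins, del, Equiv.swap_apply_def]
  split_ifs <;> omega

/-- for `n ≥ 2`, a word `u` over `{T_1,…,T_{n-1}}` and
`i ∈ {1,…,n}`, the word `∂_i(u)` is a word over `{T_1,…,T_{n-2}}` and it
evaluates in `S_{n-1}` to the deleted permutation `∂_i(ū)`, i.e. for all
`k ∈ {1,…,n-1}`, the image of `k` under the evaluation of `∂_i(u)` equals
`((k^i)·ū)_{i·ū}`. -/
theorem stmt10 (n : ℕ) (hn : 2 ≤ n) (u : List ℕ)
    (hu : ∀ j ∈ u, j ∈ Finset.Icc 1 (n - 1))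
    (i : ℕ) (hi : i ∈ Finset.Icc 1 n) :
    (∀ j ∈ wdel i u, j ∈ Finset.Icc 1 (n - 2)) ∧
    (∀ k ∈ Finset.Icc 1 (n - 1),
      wordEval (wdel i u) k = del (wordEval u i) (wordEval u (ins i k))) := by
  induction u generalizing i with
  | nil =>
    refine ⟨by simp [wdel], fun k hk => ?_⟩
    simp only [wdel, wordEval, Equiv.Perm.one_apply, ins, del]
    split_ifs <;> omega
  | cons j w ih =>
    rw [Finset.mem_Icc] at hi
    have hj := hu j List.mem_cons_self
    rw [Finset.mem_Icc] at hj
    have hu' : ∀ x ∈ w, x ∈ Finset.Icc 1 (n - 1) :=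
      fun x hx => hu x (List.mem_cons_of_mem j hx)
    by_cases h : i = j ∨ i = j + 1
    · have hi' : Equiv.swap j (j + 1) i ∈ Finset.Icc 1 n := by
        rw [Finset.mem_Icc]
        rcases h with h | h <;> subst h <;>
          simp [Equiv.swap_apply_left, Equiv.swap_apply_right] <;> omega
      obtain ⟨H1, H2⟩ := ih hu' _ hi'
      refine ⟨by simpa [wdel, h] using H1, fun k hk => ?_⟩
      have hw : wdel i (j :: w) = wdel (Equiv.swap j (j + 1) i) w := by
        simp [wdel, h]
      rw [hw]
      have := H2 k hk
      rw [this]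
      simp only [wordEval, Equiv.Perm.mul_apply]
      rw [key1 j i k h]
    · obtain ⟨H1, H2⟩ := ih hu' i (Finset.mem_Icc.mpr hi)
      have hd : 1 ≤ del i j ∧ del i j ≤ n - 2 := by
        simp only [del]; split_ifs <;> omega
      have hw : wdel i (j :: w) = del i j :: wdel i w := by
        simp [wdel, h]
      constructor
      · intro x hx
        rw [hw, List.mem_cons] at hx
        rcases hx with rfl | hx
        · rw [Finset.mem_Icc]; exact hd
        · exact H1 x hx
      · intro k hk
        rw [Finset.mem_Icc] at hk
        rw [hw]
        have hk' : Equiv.swap (del i j) (del i j + 1) k ∈ Finset.Icc 1 (n - 1) := by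
          rw [Finset.mem_Icc, Equiv.swap_apply_def]
          split_ifs <;> omega
        have := H2 _ hk'
        simp only [wordEval, Equiv.Perm.mul_apply]
        have hsi : Equiv.swap j (j + 1) i = i :=
          Equiv.swap_apply_of_ne_of_ne (by tauto) (by tauto)
        rw [this, key2 j i k (by omega) h, hsi]
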